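/- Let G and H be finite simple connected graphs, each with at least two vertices. Then the Cartesian product G □ H and the lexicographic product G ∘ H are not isomorphic. -/

import Mathlib

open SimpleGraph

/-- The cycle graph `C_n` on `ℤ/nℤ`: `i` adjacent to `j` iff `i - j ≡ ±1 (mod n)`. -/
def cycleG (n : ℕ) : SimpleGraph (ZMod n) where
  Adj i j := i ≠ j ∧ (i - j = 1 ∨ j - i = 1)
  symm := ⟨fun _ _ h => ⟨h.1.symm, h.2.symm⟩⟩
  loopless := ⟨fun _ h => h.1 rfl⟩

/-- Cartesian product of graphs. -/
def cartProd {α β : Type*} (G : SimpleGraph α) (H : SimpleGraph β) : SimpleGraph (α × β) where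
  Adj p q := (G.Adj p.1 q.1 ∧ p.2 = q.2) ∨ (p.1 = q.1 ∧ H.Adj p.2 q.2)
  symm := ⟨fun _ _ h => h.imp (fun h => ⟨h.1.symm, h.2.symm⟩) (fun h => ⟨h.1.symm, h.2.symm⟩)⟩
  loopless := ⟨fun _ h => h.elim (fun h => G.loopless.irrefl _ h.1) (fun h => H.loopless.irrefl _ h.2)⟩

/-- Kronecker (tensor/direct) product of graphs. -/
def tensorProd {α β : Type*} (G : SimpleGraph α) (H : SimpleGraph β) : SimpleGraph (α × β) where
  Adj p q := G.Adj p.1 q.1 ∧ H.Adj p.2 q.2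
  symm := ⟨fun _ _ h => ⟨h.1.symm, h.2.symm⟩⟩
  loopless := ⟨fun _ h => G.loopless.irrefl _ h.1⟩

/-- Strong product of graphs. -/
def strongProd {α β : Type*} (G : SimpleGraph α) (H : SimpleGraph β) : SimpleGraph (α × β) where
  Adj p q := (G.Adj p.1 q.1 ∧ p.2 = q.2) ∨ (p.1 = q.1 ∧ H.Adj p.2 q.2) ∨
    (G.Adj p.1 q.1 ∧ H.Adj p.2 q.2)
  symm := ⟨fun _ _ h => h.imp (fun h => ⟨h.1.symm, h.2.symm⟩)
    (fun h => h.imp (fun h => ⟨h.1.symm, h.2.symm⟩) (fun h => ⟨h.1.symm, h.2.symm⟩))⟩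
  loopless := ⟨fun _ h => h.elim (fun h => G.loopless.irrefl _ h.1)
    (fun h => h.elim (fun h => H.loopless.irrefl _ h.2) (fun h => G.loopless.irrefl _ h.1))⟩

/-- Lexicographic product of graphs. -/
def lexProd {α β : Type*} (G : SimpleGraph α) (H : SimpleGraph β) : SimpleGraph (α × β) where
  Adj p q := G.Adj p.1 q.1 ∨ (p.1 = q.1 ∧ H.Adj p.2 q.2)
  symm := ⟨fun _ _ h => h.imp (fun h => h.symm) (fun h => ⟨h.1.symm, h.2.symm⟩)⟩
  loopless := ⟨fun _ h => h.elim (fun h => G.loopless.irrefl _ h) (fun h => H.loopless.irrefl _ h.2)⟩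


open Finset in
open scoped Classical in
lemma cart_degree' {α β : Type} [Fintype α] [Fintype β] (G : SimpleGraph α) (H : SimpleGraph β)
    (x : α) (y : β) :
    (cartProd G H).degree (x, y) = G.degree x + H.degree y := by
  classical
  have h : (cartProd G H).neighborFinset (x, y)
      = (G.neighborFinset x ×ˢ {y}) ∪ ({x} ×ˢ H.neighborFinset y) := by
    ext q
    rw [SimpleGraph.mem_neighborFinset]
    simp only [mem_neighborFinset, cartProd, Finset.mem_union, Finset.mem_product,
      Finset.mem_singleton]
    tauto
  rw [degree, h, Finset.card_union_of_disjoint, Finset.card_product, Finset.card_product]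
  · simp
  · rw [Finset.disjoint_left]
    rintro ⟨a, b⟩ hq hq'
    simp only [Finset.mem_product, Finset.mem_singleton, mem_neighborFinset] at hq hq'
    exact G.loopless.irrefl x (hq'.1 ▸ hq.1)

open Finset in
open scoped Classical in
lemma lex_degree' {α β : Type} [Fintype α] [Fintype β] (G : SimpleGraph α) (H : SimpleGraph β)
    (x : α) (y : β) :
    (lexProd G H).degree (x, y) = G.degree x * Fintype.card β + H.degree y := by
  classical
  have h : (lexProd G H).neighborFinset (x, y)
      = (G.neighborFinset x ×ˢ Finset.univ) ∪ ({x} ×ˢ H.neighborFinset y) := by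
    ext q
    rw [SimpleGraph.mem_neighborFinset]
    simp only [mem_neighborFinset, lexProd, Finset.mem_union, Finset.mem_product,
      Finset.mem_singleton, Finset.mem_univ, and_true]
    tauto
  rw [degree, h, Finset.card_union_of_disjoint, Finset.card_product, Finset.card_product]
  · simp [Finset.card_univ]
  · rw [Finset.disjoint_left]
    rintro ⟨a, b⟩ hq hq'
    simp only [Finset.mem_product, Finset.mem_singleton, mem_neighborFinset] at hq hq'
    exact G.loopless.irrefl x (hq'.1 ▸ hq.1)

lemma connected_exists_adj {α : Type} [Nontrivial α] {G : SimpleGraph α}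
    (hG : G.Connected) : ∃ v w, G.Adj v w := by
  obtain ⟨v, w, hvw⟩ := exists_pair_ne α
  obtain ⟨p⟩ := hG.preconnected v w
  cases p with
  | nil => exact absurd rfl hvw
  | cons h _ => exact ⟨_, _, h⟩

theorem stmt_12 {α β : Type} [Fintype α] [Fintype β] [Nontrivial α] [Nontrivial β]
    (G : SimpleGraph α) (H : SimpleGraph β) (hG : G.Connected) (hH : H.Connected) :
    ¬ Nonempty (cartProd G H ≃g lexProd G H) := by
  classical
  rintro ⟨f⟩
  have hedges : 2 * (cartProd G H).edgeFinset.card = 2 * (lexProd G H).edgeFinset.card := by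
    rw [f.card_edgeFinset_eq]
  have h1 : ∑ p : α × β, (cartProd G H).degree p = ∑ p : α × β, (lexProd G H).degree p := by
    rw [sum_degrees_eq_twice_card_edges, sum_degrees_eq_twice_card_edges, hedges]
  rw [Fintype.sum_prod_type, Fintype.sum_prod_type] at h1
  simp only [cart_degree', lex_degree', Finset.sum_add_distrib, Finset.sum_const,
    Finset.card_univ, smul_eq_mul, ← Finset.sum_mul] at h1
  have h3 : ∑ x, Fintype.card β * (G.degree x * Fintype.card β)
      = Fintype.card β * Fintype.card β * ∑ x, G.degree x := by
    rw [← Finset.mul_sum, ← Finset.sum_mul]; ring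
  rw [h3, ← Finset.mul_sum] at h1
  have h2 : Fintype.card β * (∑ x, G.degree x)
      = Fintype.card β * Fintype.card β * (∑ x, G.degree x) := by omega
  obtain ⟨v, w, hvw⟩ := connected_exists_adj hG
  have hdeg : 0 < G.degree v := (G.degree_pos_iff_exists_adj v).mpr ⟨w, hvw⟩
  have hsum : 0 < ∑ x, G.degree x :=
    lt_of_lt_of_le hdeg
      (Finset.single_le_sum (f := fun x => G.degree x) (fun _ _ => Nat.zero_le _)
        (Finset.mem_univ v))
  have hb : 2 ≤ Fintype.card β := Fintype.one_lt_card
  have hlt : Fintype.card β < Fintype.card β * Fintype.card β := by nlinarith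
  have := Nat.mul_lt_mul_of_pos_right hlt hsum
  rw [mul_assoc] at h2
  omega
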